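/- Let E₀ > 0, Q₀ > 0, p_max > 0, and K_max = 1/ln 2. If Q₀/E₀ ≥ K_max, then no admissible power schedule p : [0,T] → [0, p_max], T < ∞, satisfies ∫₀^T log₂(1+p(τ))dτ = Q₀ and ∫₀^T p(τ)dτ ≤ E₀. -/
import Mathlib


open MeasureTheory

/-- Energy-scarce case: if Q₀/E₀ ≥ K_max = 1/ln 2, then no admissible power
schedule p : [0,T] → [0, p_max] clears the queue Q₀ using at most energy E₀. -/
theorem energy_scarce_infeasible (E₀ Q₀ pmax : ℝ)
    (hE₀ : 0 < E₀) (hQ₀ : 0 < Q₀) (hpmax : 0 < pmax)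
    (hscarce : Q₀ / E₀ ≥ 1 / Real.log 2) :
    ¬ ∃ T : ℝ, 0 ≤ T ∧ ∃ p : ℝ → ℝ,
        (∀ t ∈ Set.Icc 0 T, p t ∈ Set.Icc 0 pmax) ∧
        IntegrableOn p (Set.Icc 0 T) ∧
        (∫ t in Set.Icc 0 T, Real.logb 2 (1 + p t)) = Q₀ ∧
        (∫ t in Set.Icc 0 T, p t) ≤ E₀ := by
  rintro ⟨T, hT, p, hp_range, hp_int, hQ, hE⟩
  set μ := (volume : Measure ℝ).restrict (Set.Icc 0 T) with hμ
  have hmem : ∀ᵐ t ∂μ, t ∈ Set.Icc 0 T := ae_restrict_mem measurableSet_Icc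
  have hlog2 : (0:ℝ) < Real.log 2 := Real.log_pos one_lt_two
  have key : ∀ x : ℝ, 0 ≤ x → Real.logb 2 (1 + x) ≤ x / Real.log 2 := by
    intro x hx
    rw [Real.logb, div_le_div_iff_of_pos_right hlog2]
    have := Real.log_le_sub_one_of_pos (show (0:ℝ) < 1 + x by linarith)
    linarith
  have hnn : ∀ x : ℝ, 0 ≤ x → 0 ≤ Real.logb 2 (1 + x) := by
    intro x hx
    exact Real.logb_nonneg one_lt_two (by linarith)
  -- integrability of the logb integrand
  have hpm : AEMeasurable p μ := hp_int.aemeasurable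
  have hg_meas : AEStronglyMeasurable (fun t => Real.logb 2 (1 + p t)) μ := by
    have : AEMeasurable (fun t => Real.log (1 + p t)) μ :=
      Real.measurable_log.comp_aemeasurable (aemeasurable_const.add hpm)
    exact (this.div_const (Real.log 2)).aestronglyMeasurable
  have hdiv_int : Integrable (fun t => p t / Real.log 2) μ := hp_int.div_const _
  have hg_int : Integrable (fun t => Real.logb 2 (1 + p t)) μ := by
    refine hdiv_int.mono' hg_meas ?_
    filter_upwards [hmem] with t ht
    have h0 := (hp_range t ht).1
    rw [Real.norm_eq_abs, abs_of_nonneg (hnn _ h0)]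
    exact key _ h0
  -- integral comparison
  have hmono : (∫ t in Set.Icc 0 T, Real.logb 2 (1 + p t)) ≤
      ∫ t in Set.Icc 0 T, p t / Real.log 2 := by
    refine integral_mono_ae hg_int hdiv_int ?_
    filter_upwards [hmem] with t ht
    exact key _ (hp_range t ht).1
  have hdiv_eq : (∫ t in Set.Icc 0 T, p t / Real.log 2)
      = (∫ t in Set.Icc 0 T, p t) / Real.log 2 := integral_div _ _
  have hEQ : E₀ / Real.log 2 ≤ Q₀ := by
    rw [ge_iff_le, div_le_div_iff₀ hlog2 hE₀] at hscarce
    rw [div_le_iff₀ hlog2]; linarith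
  -- hence ∫ (p/log2 - logb) = 0
  have hle : (∫ t in Set.Icc 0 T, p t / Real.log 2) ≤ Q₀ := by
    rw [hdiv_eq]
    calc (∫ t in Set.Icc 0 T, p t) / Real.log 2 ≤ E₀ / Real.log 2 :=
          div_le_div_of_nonneg_right hE hlog2.le
      _ ≤ Q₀ := hEQ
  have hf_int : Integrable (fun t => p t / Real.log 2 - Real.logb 2 (1 + p t)) μ :=
    hdiv_int.sub hg_int
  have hf_nonneg : 0 ≤ᵐ[μ] fun t => p t / Real.log 2 - Real.logb 2 (1 + p t) := by
    filter_upwards [hmem] with t ht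
    have := key _ (hp_range t ht).1
    simp only [Pi.zero_apply]; linarith
  have hf_zero : (∫ t, (p t / Real.log 2 - Real.logb 2 (1 + p t)) ∂μ) = 0 := by
    have h1 : (∫ t, (p t / Real.log 2 - Real.logb 2 (1 + p t)) ∂μ)
        = (∫ t in Set.Icc 0 T, p t / Real.log 2) -
          (∫ t in Set.Icc 0 T, Real.logb 2 (1 + p t)) :=
      integral_sub hdiv_int hg_int
    have h2 : 0 ≤ ∫ t, (p t / Real.log 2 - Real.logb 2 (1 + p t)) ∂μ :=
      integral_nonneg_of_ae hf_nonneg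
    rw [h1] at h2 ⊢
    rw [hQ] at *
    linarith
  have hf_ae : (fun t => p t / Real.log 2 - Real.logb 2 (1 + p t)) =ᵐ[μ] 0 :=
    (integral_eq_zero_iff_of_nonneg_ae hf_nonneg hf_int).mp hf_zero
  -- so p = 0 a.e., hence logb integrand is 0 a.e.
  have hg_ae : (fun t => Real.logb 2 (1 + p t)) =ᵐ[μ] 0 := by
    filter_upwards [hmem, hf_ae] with t ht h0
    simp only [Pi.zero_apply] at h0 ⊢
    have hp0 : 0 ≤ p t := (hp_range t ht).1
    have heq : Real.log (1 + p t) = p t := by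
      rw [Real.logb] at h0
      field_simp at h0
      linarith
    by_cases hz : p t = 0
    · simp [hz]
    · exfalso
      have hlt : Real.log (1 + p t) < p t := by
        have := Real.add_one_lt_exp hz
        have h1 : (0:ℝ) < 1 + p t := by linarith
        calc Real.log (1 + p t) < Real.log (Real.exp (p t)) :=
              Real.log_lt_log h1 (by linarith)
          _ = p t := Real.log_exp _
      linarith
  have : (∫ t in Set.Icc 0 T, Real.logb 2 (1 + p t)) = 0 := by
    rw [integral_congr_ae hg_ae]; simp
  rw [hQ] at this
  exact absurd this (ne_of_gt hQ₀)
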